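/- arXiv:1612.03857 — 9 statements merged into one kernel-verified Lean document; each statement's English description precedes it below -/
import Mathlib

section
/- Let H be a complex Hilbert space and let A, C be bounded linear operators on H. Then the range of C is contained in the range of A if and only if there exists a bounded linear operator D on H such that A ∘ D = C (i.e., the equation AX = C has a solution). Moreover, if these equivalent conditions hold, then there exists λ > 0 such that C ∘ C* ≤ λ • (A ∘ A*) in the Loewner order. -/
open ContinuousLinearMap

/-- Theorem 2.4: for bounded operators on a complex Hilbert space,
`range C ⊆ range A` iff `AX = C` is solvable; in that case
`C C* ≤ λ (A A*)` for some `λ > 0` (Loewner order). -/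
theorem stmt0 {H : Type*} [NormedAddCommGroup H] [InnerProductSpace ℂ H] [CompleteSpace H]
    (A C : H →L[ℂ] H) :
    (LinearMap.range (C : H →ₗ[ℂ] H) ≤ LinearMap.range (A : H →ₗ[ℂ] H) ↔ ∃ D : H →L[ℂ] H, A ∘L D = C) ∧
    (LinearMap.range (C : H →ₗ[ℂ] H) ≤ LinearMap.range (A : H →ₗ[ℂ] H) →
      ∃ l : ℝ, 0 < l ∧ ((l : ℂ) • (A ∘L adjoint A) - C ∘L adjoint C).IsPositive) := by
  -- main factorization
  have main : LinearMap.range (C : H →ₗ[ℂ] H) ≤ LinearMap.range (A : H →ₗ[ℂ] H) → ∃ D : H →L[ℂ] H, A ∘L D = C := by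
    intro hr
    set N : Submodule ℂ H := LinearMap.ker (A : H →ₗ[ℂ] H) with hN
    haveI : CompleteSpace N := A.isClosed_ker.completeSpace_coe
    set K : Submodule ℂ H := Nᗮ with hK
    -- existence of preimages in K
    have hex : ∀ x : H, ∃ k : K, A k = C x := by
      intro x
      obtain ⟨z, hz⟩ := hr ⟨x, rfl⟩
      obtain ⟨y, hy, w, hw, hyw⟩ := N.exists_add_mem_mem_orthogonal z
      refine ⟨⟨w, hw⟩, ?_⟩
      have : A z = A y + A w := by rw [hyw, map_add]
      have hy0 : A y = 0 := hy
      simpa [this, hy0] using hz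
    have huniq : ∀ k k' : K, A k = A k' → k = k' := by
      intro k k' h
      have hker : (k : H) - (k' : H) ∈ N := by
        simp only [hN, LinearMap.mem_ker, ContinuousLinearMap.coe_coe, map_sub, h, sub_self]
      have hm : (k : H) - (k' : H) ∈ K := K.sub_mem k.2 k'.2
      have : (k : H) - (k' : H) = 0 := by
        have := Submodule.inner_right_of_mem_orthogonal hker hm
        rwa [inner_self_eq_zero] at this
      exact Subtype.ext (sub_eq_zero.mp this)
    classical
    let f : H → K := fun x => (hex x).choose
    have hf : ∀ x, A (f x) = C x := fun x => (hex x).choose_spec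
    have hadd : ∀ x y, f (x + y) = f x + f y := by
      intro x y
      apply huniq
      rw [hf]
      push_cast
      rw [map_add, map_add, hf, hf]
    have hsmul : ∀ (c : ℂ) (x : H), f (c • x) = c • f x := by
      intro c x
      apply huniq
      rw [hf]
      push_cast
      rw [map_smul, map_smul, hf]
    let g : H →ₗ[ℂ] K := { toFun := f, map_add' := hadd, map_smul' := hsmul }
    -- closed graph
    have hcont : Continuous g := by
      apply g.continuous_of_seq_closed_graph
      intro u x y hu hgu
      apply huniq
      show A ((y : K) : H) = A ((f x : K) : H)
      rw [hf]
      have h1 : Filter.Tendsto (fun n => C (u n)) Filter.atTop (nhds (A (y : H))) := by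
        have := ((A.continuous.comp continuous_subtype_val).tendsto y).comp hgu
        have heq : ((fun z : K => A (z : H)) ∘ (⇑g ∘ u)) = fun n => C (u n) := by
          funext n
          exact hf (u n)
        rwa [show (⇑A ∘ Subtype.val : K → H) = fun z : K => A (z : H) from rfl, heq] at this
      have h2 : Filter.Tendsto (fun n => C (u n)) Filter.atTop (nhds (C x)) :=
        (C.continuous.tendsto x).comp hu
      exact tendsto_nhds_unique h1 h2
    let D : H →L[ℂ] H := K.subtypeL.comp ⟨g, hcont⟩
    refine ⟨D, ?_⟩
    ext x
    exact hf x
  refine ⟨⟨main, ?_⟩, ?_⟩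
  · rintro ⟨D, rfl⟩ y ⟨x, rfl⟩
    exact ⟨D x, rfl⟩
  · intro hr
    obtain ⟨D, hD⟩ := main hr
    refine ⟨‖D‖ ^ 2 + 1, by positivity, ?_⟩
    set l : ℝ := ‖D‖ ^ 2 + 1 with hl
    constructor
    · rw [← isSelfAdjoint_iff_isSymmetric, isSelfAdjoint_iff', map_sub, LinearIsometryEquiv.map_smulₛₗ]
      simp [adjoint_comp, adjoint_adjoint, Complex.conj_ofReal]
    · intro x
      rw [reApplyInnerSelf_apply]
      simp only [sub_apply, smul_apply, inner_sub_left, inner_smul_left]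
      have hAA : inner ℂ ((A ∘L adjoint A) x) x = (‖adjoint A x‖ : ℂ) ^ 2 := by
        rw [comp_apply, ← adjoint_adjoint A, adjoint_inner_left, adjoint_adjoint,
          inner_self_eq_norm_sq_to_K]
        norm_cast
      have hCC : inner ℂ ((C ∘L adjoint C) x) x = (‖adjoint C x‖ : ℂ) ^ 2 := by
        rw [comp_apply, ← adjoint_adjoint C, adjoint_inner_left, adjoint_adjoint,
          inner_self_eq_norm_sq_to_K]
        norm_cast
      rw [hAA, hCC]
      have hC : ‖adjoint C x‖ ≤ ‖D‖ * ‖adjoint A x‖ := by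
        have : adjoint C x = adjoint D (adjoint A x) := by
          rw [← hD, adjoint_comp, comp_apply]
        rw [this]
        calc ‖adjoint D (adjoint A x)‖ ≤ ‖adjoint D‖ * ‖adjoint A x‖ := (adjoint D).le_opNorm _
          _ = ‖D‖ * ‖adjoint A x‖ := by rw [adjoint.norm_map]
      have key : ‖adjoint C x‖ ^ 2 ≤ l * ‖adjoint A x‖ ^ 2 := by
        calc ‖adjoint C x‖ ^ 2 ≤ (‖D‖ * ‖adjoint A x‖) ^ 2 := by
              apply pow_le_pow_left₀ (norm_nonneg _) hC
          _ = ‖D‖ ^ 2 * ‖adjoint A x‖ ^ 2 := by ring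
          _ ≤ l * ‖adjoint A x‖ ^ 2 := by
              apply mul_le_mul_of_nonneg_right _ (by positivity)
              rw [hl]; linarith
      have hconj : (starRingEnd ℂ) (l : ℂ) = (l : ℂ) := by simp
      rw [hconj]
      have hre : ((l : ℂ) * (‖adjoint A x‖ : ℂ) ^ 2 - (‖adjoint C x‖ : ℂ) ^ 2)
          = ((l * ‖adjoint A x‖ ^ 2 - ‖adjoint C x‖ ^ 2 : ℝ) : ℂ) := by push_cast; ring
      rw [hre]
      show (0:ℝ) ≤ (((l * ‖adjoint A x‖ ^ 2 - ‖adjoint C x‖ ^ 2 : ℝ) : ℂ)).re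
      rw [Complex.ofReal_re]
      linarith [key]
end

section
/- Let H be a complex Hilbert space and let A, C be bounded linear operators on H. If C ∘ C* = λ • (A ∘ A*) for some real λ > 0, then there exists a bounded linear operator X on H such that A ∘ X = C. -/
open ContinuousLinearMap

/-- Theorem 2.5: if `C C* = λ A A*` for some `λ > 0`, then `AX = C` has a solution. -/
theorem stmt1 {H : Type*} [NormedAddCommGroup H] [InnerProductSpace ℂ H] [CompleteSpace H]
    (A C : H →L[ℂ] H) (l : ℝ) (hl : 0 < l)
    (h : C ∘L adjoint C = (l : ℂ) • (A ∘L adjoint A)) :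
    ∃ X : H →L[ℂ] H, A ∘L X = C := by
  classical
  -- key norm identity
  have key2 : ∀ x : H, ‖adjoint C x‖ ^ 2 = l * ‖adjoint A x‖ ^ 2 := by
    intro x
    have hx : (C ∘L adjoint C) x = ((l : ℂ) • (A ∘L adjoint A)) x := by rw [h]
    have h1 : (inner ℂ ((adjoint C) x) ((adjoint C) x) : ℂ)
        = (l : ℂ) * inner ℂ ((adjoint A) x) ((adjoint A) x) := by
      have h0 := congrArg (fun y => (inner ℂ x y : ℂ)) hx
      simp only [ContinuousLinearMap.comp_apply, ContinuousLinearMap.smul_apply,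
        inner_smul_right] at h0
      rwa [← ContinuousLinearMap.adjoint_inner_left C,
        ← ContinuousLinearMap.adjoint_inner_left A] at h0
    rw [inner_self_eq_norm_sq_to_K, inner_self_eq_norm_sq_to_K] at h1
    have h3 : ((‖(adjoint C) x‖ ^ 2 : ℝ) : ℂ) = ((l * ‖(adjoint A) x‖ ^ 2 : ℝ) : ℂ) := by
      push_cast
      exact h1
    exact_mod_cast h3
  have key : ∀ x : H, ‖adjoint C x‖ = Real.sqrt l * ‖adjoint A x‖ := by
    intro x
    have h2 := congrArg Real.sqrt (key2 x)
    rwa [Real.sqrt_mul hl.le, Real.sqrt_sq (norm_nonneg _), Real.sqrt_sq (norm_nonneg _)] at h2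
  set f : H →ₗ[ℂ] H := (adjoint A : H →L[ℂ] H).toLinearMap with hf
  set g : H →ₗ[ℂ] H := (adjoint C : H →L[ℂ] H).toLinearMap with hg
  have hle : LinearMap.ker f ≤ LinearMap.ker g := by
    intro x hx
    simp only [LinearMap.mem_ker] at hx ⊢
    have : ‖adjoint C x‖ = 0 := by
      rw [key x]
      simp [show (adjoint A) x = 0 from hx]
    simpa [hg] using norm_eq_zero.mp this
  set p : Submodule ℂ H := LinearMap.range f with hp
  set q : Submodule ℂ H := p.topologicalClosure with hq
  -- the linear map on the range of A*
  set φ : p →ₗ[ℂ] H :=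
    ((LinearMap.ker f).liftQ g hle) ∘ₗ (f.quotKerEquivRange.symm : p →ₗ[ℂ] H ⧸ LinearMap.ker f)
    with hφ
  have hφ_apply : ∀ (x : H) (hx : f x ∈ p), φ ⟨f x, hx⟩ = g x := by
    intro x hx
    simp only [hφ, LinearMap.comp_apply, LinearEquiv.coe_coe]
    rw [f.quotKerEquivRange_symm_apply_image x hx]
    simp
  have hφ_bound : ∀ u : p, ‖φ u‖ ≤ Real.sqrt l * ‖u‖ := by
    rintro ⟨u, hu⟩
    obtain ⟨x, rfl⟩ := hu
    rw [hφ_apply x ⟨x, rfl⟩]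
    have : ‖g x‖ = Real.sqrt l * ‖f x‖ := key x
    rw [this]
    exact le_rfl
  set φL : p →L[ℂ] H := φ.mkContinuous (Real.sqrt l) hφ_bound with hφL
  -- inclusion of p into its closure
  set incl : p →ₗ[ℂ] q := Submodule.inclusion p.le_topologicalClosure with hincl
  have hincl_norm : ∀ u : p, ‖incl u‖ = ‖u‖ := fun u => rfl
  set inclL : p →L[ℂ] q := incl.mkContinuous 1 (fun u => by rw [hincl_norm, one_mul]) with hinclL
  have hdense : DenseRange inclL := by
    refine Topology.IsInducing.subtypeVal.dense_iff.2 fun x => ?_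
    convert show (x : H) ∈ closure (p : Set H) from x.prop
    rw [← Set.range_comp]
    exact Set.ext fun y => ⟨by rintro ⟨y, rfl⟩; exact y.prop, fun hy => ⟨⟨y, hy⟩, rfl⟩⟩
  have hui : IsUniformInducing inclL :=
    (AddMonoidHomClass.isometry_of_norm inclL fun u => rfl).isUniformInducing
  haveI : CompleteSpace q := (Submodule.isClosed_topologicalClosure p).completeSpace_coe
  set g' : q →L[ℂ] H := φL.extend inclL with hg'
  set Y : H →L[ℂ] H := g' ∘L (q.orthogonalProjectionOnto : H →L[ℂ] q) with hY
  have hYA : Y ∘L adjoint A = adjoint C := by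
    ext x
    have hmp : (adjoint A) x ∈ p := ⟨x, rfl⟩
    have hm : (adjoint A) x ∈ q := p.le_topologicalClosure hmp
    have hproj : q.orthogonalProjectionOnto ((adjoint A) x) = ⟨(adjoint A) x, hm⟩ := by
      exact Submodule.orthogonalProjectionOnto_mem_subspace_eq_self (⟨(adjoint A) x, hm⟩ : q)
    have hiv : inclL ⟨(adjoint A) x, hmp⟩ = ⟨(adjoint A) x, hm⟩ := rfl
    calc (Y ∘L adjoint A) x = g' (q.orthogonalProjectionOnto ((adjoint A) x)) := rfl
      _ = g' (inclL ⟨(adjoint A) x, hmp⟩) := by rw [hproj, hiv]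
      _ = φL ⟨(adjoint A) x, hmp⟩ := by rw [ContinuousLinearMap.extend_eq _ hdense hui]
      _ = φ ⟨f x, hmp⟩ := rfl
      _ = g x := hφ_apply x hmp
      _ = (adjoint C) x := rfl
  refine ⟨adjoint Y, ?_⟩
  have := congrArg adjoint hYA
  rwa [adjoint_comp, adjoint_adjoint, adjoint_adjoint] at this
end

section
/- Let H be a complex Hilbert space and let A, C be bounded linear operators on H. If A ∘ A* = λ • (C ∘ C*) for some real λ > 0, then the range of A equals the range of C. -/
open ContinuousLinearMap

section Douglas

variable {H : Type*} [NormedAddCommGroup H] [InnerProductSpace ℂ H] [CompleteSpace H]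

/-- Douglas-type lemma: a majorization `‖A* x‖ ≤ M ‖C* x‖` implies `range A ≤ range C`. -/
lemma douglas_aux (A C : H →L[ℂ] H) (M : ℝ)
    (hn : ∀ x, ‖adjoint A x‖ ≤ M * ‖adjoint C x‖) :
    LinearMap.range (A : H →ₗ[ℂ] H) ≤ LinearMap.range (C : H →ₗ[ℂ] H) := by
  set B : H →L[ℂ] H := adjoint A with hB
  set D : H →L[ℂ] H := adjoint C with hD
  have hker : LinearMap.ker (D : H →ₗ[ℂ] H) ≤ LinearMap.ker (B : H →ₗ[ℂ] H) := by
    intro x hx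
    have hx0 : D x = 0 := hx
    have := hn x
    rw [hx0] at this
    simp only [norm_zero, mul_zero] at this
    have : B x = 0 := norm_le_zero_iff.mp this
    exact this
  -- the factor map on the range of D
  let φlin : LinearMap.range (D : H →ₗ[ℂ] H) →ₗ[ℂ] H :=
    ((LinearMap.ker (D : H →ₗ[ℂ] H)).liftQ (B : H →ₗ[ℂ] H) hker).comp
      ((D : H →ₗ[ℂ] H).quotKerEquivRange.symm : _ →ₗ[ℂ] _)
  have key : ∀ x : H, φlin ⟨(D : H →ₗ[ℂ] H) x, LinearMap.mem_range_self _ x⟩ = B x := by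
    intro x
    simp only [φlin, LinearMap.comp_apply, LinearEquiv.coe_coe,
      LinearMap.quotKerEquivRange_symm_apply_image]
    rfl
  have hbound : ∀ y : LinearMap.range (D : H →ₗ[ℂ] H), ‖φlin y‖ ≤ max M 0 * ‖y‖ := by
    rintro ⟨_, x, rfl⟩
    rw [show (⟨(D : H →ₗ[ℂ] H) x, ⟨x, rfl⟩⟩ : LinearMap.range (D : H →ₗ[ℂ] H))
        = ⟨(D : H →ₗ[ℂ] H) x, LinearMap.mem_range_self _ x⟩ from rfl, key x]
    calc ‖B x‖ ≤ M * ‖D x‖ := hn x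
    _ ≤ max M 0 * ‖D x‖ := by
        apply mul_le_mul_of_nonneg_right (le_max_left _ _) (norm_nonneg _)
    _ = max M 0 * ‖(⟨(D : H →ₗ[ℂ] H) x, LinearMap.mem_range_self _ x⟩ :
        LinearMap.range (D : H →ₗ[ℂ] H))‖ := rfl
  let φ : LinearMap.range (D : H →ₗ[ℂ] H) →L[ℂ] H :=
    φlin.mkContinuous (max M 0) hbound
  set K := (LinearMap.range (D : H →ₗ[ℂ] H)).topologicalClosure with hK
  have hle : LinearMap.range (D : H →ₗ[ℂ] H) ≤ K := Submodule.le_topologicalClosure _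
  let elin : LinearMap.range (D : H →ₗ[ℂ] H) →ₗ[ℂ] K := Submodule.inclusion hle
  have hnorme : ∀ y : LinearMap.range (D : H →ₗ[ℂ] H), ‖elin y‖ = ‖y‖ := fun y => rfl
  let e : LinearMap.range (D : H →ₗ[ℂ] H) →L[ℂ] K :=
    elin.mkContinuous 1 (fun y => by rw [hnorme, one_mul])
  have hiso : Isometry e := AddMonoidHomClass.isometry_of_norm e (fun y => rfl)
  have hdense : DenseRange e := by
    refine Subtype.dense_iff.mpr ?_
    intro z hz
    have himg : (LinearMap.range (D : H →ₗ[ℂ] H) : Set H) ⊆ (↑) '' Set.range e := by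
      intro w hw
      exact ⟨e ⟨w, hw⟩, ⟨⟨w, hw⟩, rfl⟩, rfl⟩
    have hz' : z ∈ closure (LinearMap.range (D : H →ₗ[ℂ] H) : Set H) := by
      rw [← Submodule.topologicalClosure_coe]
      exact hz
    exact closure_mono himg hz'
  let V₀ : K →L[ℂ] H := φ.extend e
  have : CompleteSpace K := (Submodule.isClosed_topologicalClosure _).completeSpace_coe
  let V : H →L[ℂ] H := V₀.comp (K.orthogonalProjectionOnto)
  have hVD : ∀ x : H, V (D x) = B x := by
    intro x
    have hmem : (D : H →ₗ[ℂ] H) x ∈ LinearMap.range (D : H →ₗ[ℂ] H) := LinearMap.mem_range_self _ x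
    have hproj : K.orthogonalProjectionOnto (D x) = e ⟨D x, hmem⟩ :=
      Submodule.orthogonalProjectionOnto_mem_subspace_eq_self (K := K) (e ⟨D x, hmem⟩)
    show V₀ (K.orthogonalProjectionOnto (D x)) = B x
    rw [hproj]
    have hext := ContinuousLinearMap.extend_eq φ hdense hiso.isUniformInducing ⟨D x, hmem⟩
    rw [hext]
    exact key x
  have hVC : V ∘L adjoint C = adjoint A := by
    ext x
    exact hVD x
  have hA : C ∘L adjoint V = A := by
    have h2 := congrArg adjoint hVC
    rwa [adjoint_comp, adjoint_adjoint, adjoint_adjoint] at h2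
  rintro _ ⟨x, rfl⟩
  exact ⟨adjoint V x, by rw [← hA]; rfl⟩

end Douglas

/-- Corollary 2.6: if `A A* = λ C C*` for some `λ > 0`, then `range A = range C`. -/
theorem stmt2 {H : Type*} [NormedAddCommGroup H] [InnerProductSpace ℂ H] [CompleteSpace H]
    (A C : H →L[ℂ] H) (l : ℝ) (hl : 0 < l)
    (h : A ∘L adjoint A = (l : ℂ) • (C ∘L adjoint C)) :
    LinearMap.range (A : H →ₗ[ℂ] H) = LinearMap.range (C : H →ₗ[ℂ] H) := by
  have hsq : ∀ x : H, ‖adjoint A x‖ ^ 2 = l * ‖adjoint C x‖ ^ 2 := by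
    intro x
    have h1 : ‖adjoint A x‖ ^ 2 = Complex.re (inner ℂ x ((A ∘L adjoint A) x) : ℂ) := by
      have := ContinuousLinearMap.apply_norm_sq_eq_inner_adjoint_right (adjoint A) x
      rwa [adjoint_adjoint] at this
    have h2 : ‖adjoint C x‖ ^ 2 = Complex.re (inner ℂ x ((C ∘L adjoint C) x) : ℂ) := by
      have := ContinuousLinearMap.apply_norm_sq_eq_inner_adjoint_right (adjoint C) x
      rwa [adjoint_adjoint] at this
    rw [h1, h2, h]
    simp only [ContinuousLinearMap.smul_apply, inner_smul_right]
    simp [Complex.ofReal_re, Complex.mul_re, Complex.ofReal_im]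
  have hn : ∀ x : H, ‖adjoint A x‖ = Real.sqrt l * ‖adjoint C x‖ := by
    intro x
    have hnn : (0:ℝ) ≤ ‖adjoint C x‖ := norm_nonneg _
    rw [← Real.sqrt_sq (norm_nonneg (adjoint A x)), hsq x, Real.sqrt_mul hl.le,
      Real.sqrt_sq hnn]
  have hs0 : Real.sqrt l ≠ 0 := by positivity
  apply le_antisymm
  · exact douglas_aux A C (Real.sqrt l) (fun x => (hn x).le)
  · refine douglas_aux C A (Real.sqrt l)⁻¹ (fun x => ?_)
    rw [hn x, ← mul_assoc, inv_mul_cancel₀ hs0, one_mul]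
end

section
/- Let H be a complex Hilbert space and let A, B, W₁, W₂, W₃, W₄ be bounded linear operators on H satisfying A ∘ W₂ ∘ P_{B*} + P_A ∘ W₃ ∘ B = 0. Then the operators X_h := N_A ∘ W₁ + W₂ ∘ P_{B*} and Y_h := P_A ∘ W₃ + W₄ ∘ N_{B*} satisfy A ∘ X_h + Y_h ∘ B = 0. -/
open ContinuousLinearMap

variable {H : Type*} [NormedAddCommGroup H] [InnerProductSpace ℂ H] [CompleteSpace H]

/-- The orthogonal projection of `H` onto the closure of the range of `A`,
regarded as a bounded operator on `H`. -/
noncomputable def rangeProj (A : H →L[ℂ] H) : H →L[ℂ] H :=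
  haveI : CompleteSpace (LinearMap.range (A : H →ₗ[ℂ] H)).topologicalClosure :=
    (Submodule.isClosed_topologicalClosure _).completeSpace_coe
  (LinearMap.range (A : H →ₗ[ℂ] H)).topologicalClosure.subtypeL ∘L
    Submodule.orthogonalProjectionOnto (LinearMap.range (A : H →ₗ[ℂ] H)).topologicalClosure

lemma rangeProj_comp_self (B : H →L[ℂ] H) : rangeProj B ∘L B = B := by
  ext x
  simp only [rangeProj, comp_apply, Submodule.subtypeL_apply]
  exact Submodule.starProjection_eq_self_iff.mpr
    (Submodule.le_topologicalClosure _ (LinearMap.mem_range_self _ x))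

lemma comp_rangeProj_adjoint (A : H →L[ℂ] H) : A ∘L rangeProj (adjoint A) = A := by
  ext x
  simp only [rangeProj, comp_apply, Submodule.subtypeL_apply]
  set K := (LinearMap.range (adjoint A : H →ₗ[ℂ] H)).topologicalClosure
  have hmem : x - K.orthogonalProjectionOnto x ∈ Kᗮ :=
    K.sub_starProjection_mem_orthogonal x
  have hK : Kᗮ = (LinearMap.range (adjoint A : H →ₗ[ℂ] H))ᗮ := by
    show ((LinearMap.range (adjoint A : H →ₗ[ℂ] H)).topologicalClosure)ᗮ = _
    rw [← Submodule.orthogonal_orthogonal_eq_closure,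
      Submodule.triorthogonal_eq_orthogonal]
  rw [hK] at hmem
  have h0 : A x - A (K.orthogonalProjectionOnto x) = 0 := by
    rw [← map_sub, ← inner_self_eq_zero (𝕜 := ℂ), ← adjoint_inner_left]
    exact hmem _ (LinearMap.mem_range_self _ _)
  exact (sub_eq_zero.mp h0).symm

/-- Theorem 3.1 (first half): with `N_A = I - P_{A*}`, `N_{B*} = I - P_B`,
if `A W₂ P_{B*} + P_A W₃ B = 0` then `X_h = N_A W₁ + W₂ P_{B*}` and
`Y_h = P_A W₃ + W₄ N_{B*}` satisfy `A X_h + Y_h B = 0`. -/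
theorem stmt4 (A B W₁ W₂ W₃ W₄ : H →L[ℂ] H)
    (h : A ∘L W₂ ∘L rangeProj (adjoint B) + rangeProj A ∘L W₃ ∘L B = 0) :
    A ∘L ((1 - rangeProj (adjoint A)) ∘L W₁ + W₂ ∘L rangeProj (adjoint B)) +
      (rangeProj A ∘L W₃ + W₄ ∘L (1 - rangeProj B)) ∘L B = 0 := by
  have h1 : A ∘L ((1 - rangeProj (adjoint A)) ∘L W₁) = 0 := by
    rw [← comp_assoc, comp_sub, one_def, comp_id, comp_rangeProj_adjoint, sub_self, zero_comp]
  have h2 : (W₄ ∘L (1 - rangeProj B)) ∘L B = 0 := by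
    rw [comp_assoc, sub_comp, one_def, id_comp, rangeProj_comp_self, sub_self, comp_zero]
  rw [comp_add, add_comp, h1, h2, zero_add, add_zero, ← comp_assoc, comp_assoc]
  exact h
end

section
/- Let H be a complex Hilbert space and let A, B, X, Y be bounded linear operators on H with A ∘ X + Y ∘ B = 0. Then there exist bounded linear operators W₁, W₂, W₃, W₄ on H with A ∘ W₂ ∘ P_{B*} + P_A ∘ W₃ ∘ B = 0 such that X = N_A ∘ W₁ + W₂ ∘ P_{B*} and Y = P_A ∘ W₃ + W₄ ∘ N_{B*}. -/
open ContinuousLinearMap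

variable {H : Type*} [NormedAddCommGroup H] [InnerProductSpace ℂ H] [CompleteSpace H]

lemma rangeProj_comp (A : H →L[ℂ] H) : rangeProj A ∘L A = A := by
  haveI : CompleteSpace (LinearMap.range (A : H →ₗ[ℂ] H)).topologicalClosure :=
    (Submodule.isClosed_topologicalClosure _).completeSpace_coe
  ext x
  exact Submodule.starProjection_eq_self_iff.mpr
    ((LinearMap.range (A : H →ₗ[ℂ] H)).le_topologicalClosure (LinearMap.mem_range_self _ x))

lemma rangeProj_isSelfAdjoint (A : H →L[ℂ] H) : IsSelfAdjoint (rangeProj A) := by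
  haveI : CompleteSpace (LinearMap.range (A : H →ₗ[ℂ] H)).topologicalClosure :=
    (Submodule.isClosed_topologicalClosure _).completeSpace_coe
  exact isSelfAdjoint_starProjection _

lemma comp_rangeProj_eq_zero {C A : H →L[ℂ] H} (h : C ∘L A = 0) : C ∘L rangeProj A = 0 := by
  haveI : CompleteSpace (LinearMap.range (A : H →ₗ[ℂ] H)).topologicalClosure :=
    (Submodule.isClosed_topologicalClosure _).completeSpace_coe
  ext x
  have hle : (LinearMap.range (A : H →ₗ[ℂ] H)).topologicalClosure ≤ LinearMap.ker (C : H →ₗ[ℂ] H) := by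
    apply Submodule.topologicalClosure_minimal
    · rintro _ ⟨y, rfl⟩
      simpa using congrFun (congrArg DFunLike.coe h) y
    · exact ContinuousLinearMap.isClosed_ker C
  exact hle (Submodule.orthogonalProjectionOnto _ x).2

lemma rangeProj_adjoint_comp_eq_zero {A C : H →L[ℂ] H} (h : A ∘L C = 0) :
    rangeProj (adjoint A) ∘L C = 0 := by
  have h' : adjoint C ∘L adjoint A = 0 := by
    rw [← adjoint_comp, h]; simp
  have h2 := comp_rangeProj_eq_zero h'
  have := congrArg adjoint h2
  rwa [adjoint_comp, (rangeProj_isSelfAdjoint (adjoint A)).adjoint_eq, adjoint_adjoint,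
    map_zero adjoint] at this

lemma comp_one_sub_rangeProj_adjoint (B : H →L[ℂ] H) :
    B ∘L (1 - rangeProj (adjoint B)) = 0 := by
  have h1 : rangeProj (adjoint B) ∘L adjoint B = adjoint B := rangeProj_comp (adjoint B)
  have h2 : (1 - rangeProj (adjoint B)) ∘L adjoint B = 0 := by
    rw [sub_comp, one_def, id_comp, h1, sub_self]
  have := congrArg adjoint h2
  rwa [adjoint_comp, adjoint_adjoint, map_zero adjoint,
    show adjoint (1 - rangeProj (adjoint B)) = 1 - rangeProj (adjoint B) by
      simp [map_sub, (rangeProj_isSelfAdjoint (adjoint B)).adjoint_eq, show adjoint (1 : H →L[ℂ] H) = 1 from adjoint_one]] at this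

/-- Theorem 3.1 (second half): every solution of `A X + Y B = 0` has the form
`X = N_A W₁ + W₂ P_{B*}`, `Y = P_A W₃ + W₄ N_{B*}` with
`A W₂ P_{B*} + P_A W₃ B = 0`. -/
theorem stmt5 (A B X Y : H →L[ℂ] H) (h : A ∘L X + Y ∘L B = 0) :
    ∃ W₁ W₂ W₃ W₄ : H →L[ℂ] H,
      A ∘L W₂ ∘L rangeProj (adjoint B) + rangeProj A ∘L W₃ ∘L B = 0 ∧
      X = (1 - rangeProj (adjoint A)) ∘L W₁ + W₂ ∘L rangeProj (adjoint B) ∧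
      Y = rangeProj A ∘L W₃ + W₄ ∘L (1 - rangeProj B) := by
  set P := rangeProj (adjoint B) with hP
  set Q := rangeProj A with hQ
  set Pa := rangeProj (adjoint A) with hPa
  set Pb := rangeProj B with hPb
  have hmul : ∀ C D : H →L[ℂ] H, C ∘L D = C * D := fun _ _ => rfl
  have h' : A * X + Y * B = 0 := by rw [← hmul, ← hmul]; exact h
  have hYB : Y * B = -(A * X) := by linear_combination (norm := noncomm_ring) h'
  have hQA : Q * A = A := by rw [← hmul]; exact rangeProj_comp A
  have hBP : B * (1 - P) = 0 := by rw [← hmul]; exact comp_one_sub_rangeProj_adjoint B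
  have f1 : A * (X * (1 - P)) = 0 := by
    rw [← mul_assoc, ← neg_neg (A * X), ← hYB, neg_mul, mul_assoc, hBP, mul_zero, neg_zero]
  have f1' : Pa * (X * (1 - P)) = 0 := by
    rw [← hmul, ← hmul]
    exact rangeProj_adjoint_comp_eq_zero (by rw [hmul, hmul]; exact f1)
  have f2 : (1 - Q) * Y * B = 0 := by
    rw [mul_assoc, hYB, mul_neg, ← mul_assoc, sub_mul, one_mul, hQA, sub_self, zero_mul, neg_zero]
  have f2' : (1 - Q) * Y * Pb = 0 := by
    rw [← hmul]; exact comp_rangeProj_eq_zero (by rw [hmul]; exact f2)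
  refine ⟨X ∘L (1 - P), X, Y, (1 - Q) ∘L Y, ?_, ?_, ?_⟩
  · simp only [hmul]
    have e1 : A * X * P = A * X := by
      have : A * X - A * X * P = 0 := by
        linear_combination (norm := noncomm_ring) f1
      linear_combination (norm := noncomm_ring) -this
    rw [hYB, mul_neg, ← mul_assoc Q A X, hQA, ← mul_assoc A X P, e1, add_neg_cancel]
  · simp only [hmul]
    rw [sub_mul, one_mul, f1', sub_zero]
    noncomm_ring
  · simp only [hmul]
    rw [mul_sub, mul_one, f2', sub_zero]
    noncomm_ring
end

section
/- Let H be a complex Hilbert space and let A, B, C be bounded linear operators on H. If the range of C ∘ N_B is contained in the range of A and the range of P_{B*} ∘ C* is contained in the range of B*, then there exist bounded linear operators X and Y on H such that A ∘ X + Y ∘ B = C. -/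
open ContinuousLinearMap

variable {H : Type*} [NormedAddCommGroup H] [InnerProductSpace ℂ H] [CompleteSpace H]

/-- Douglas factorization: range inclusion gives a bounded solution of `A ∘ X = C`. -/
lemma douglas (A C : H →L[ℂ] H) (h : LinearMap.range (C : H →ₗ[ℂ] H) ≤ LinearMap.range (A : H →ₗ[ℂ] H)) :
    ∃ X : H →L[ℂ] H, A ∘L X = C := by
  classical
  set K : Submodule ℂ H := LinearMap.ker (A : H →ₗ[ℂ] H) with hK
  haveI : CompleteSpace K := (ContinuousLinearMap.isClosed_ker A).completeSpace_coe
  haveI : CompleteSpace Kᗮ := K.isClosed_orthogonal.completeSpace_coe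
  have hx : ∀ v : H, ∃ x, A x = C v := fun v => h ⟨v, rfl⟩
  choose f hf using hx
  set P := Kᗮ.orthogonalProjectionOnto with hP
  -- projecting doesn't change the image under A
  have hAP : ∀ x : H, A ((P x : H)) = A x := by
    intro x
    have hmem : x - (P x : H) ∈ Kᗮᗮ := Kᗮ.sub_starProjection_mem_orthogonal x
    rw [K.orthogonal_orthogonal] at hmem
    have : A (x - (P x : H)) = 0 := hmem
    rw [map_sub, sub_eq_zero] at this
    exact this.symm
  -- key uniqueness
  have key : ∀ z w : H, A z = A w → (P z : H) = P w := by
    intro z w hzw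
    have hmem : z - w ∈ K := by
      simp only [hK, LinearMap.mem_ker, map_sub, ContinuousLinearMap.coe_coe, hzw, sub_self]
    have : P (z - w) = 0 :=
      Submodule.orthogonalProjectionOnto_apply_of_mem_orthogonal
        (K.le_orthogonal_orthogonal hmem)
    have := congrArg (Subtype.val) this
    rw [map_sub] at this
    simpa [sub_eq_zero] using this
  have keymem : ∀ z w : H, z ∈ Kᗮ → w ∈ Kᗮ → A z = A w → z = w := by
    intro z w hz hw hzw
    have h1 : z - w ∈ Kᗮ := Submodule.sub_mem _ hz hw
    have h2 : z - w ∈ K := by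
      simp only [hK, LinearMap.mem_ker, map_sub, ContinuousLinearMap.coe_coe, hzw, sub_self]
    have := (Submodule.mem_bot (R := ℂ)).1 (by
      rw [← K.inf_orthogonal_eq_bot]; exact ⟨h2, h1⟩)
    rwa [sub_eq_zero] at this
  let g : H →ₗ[ℂ] H :=
    { toFun := fun v => (P (f v) : H)
      map_add' := by
        intro a b
        have : A (f (a + b)) = A (f a + f b) := by
          rw [hf, map_add, map_add, hf, hf]
        show ((P (f (a + b)) : H)) = (P (f a) : H) + (P (f b) : H)
        rw [key _ _ this, map_add, Submodule.coe_add]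
      map_smul' := by
        intro c a
        have : A (f (c • a)) = A (c • f a) := by
          rw [hf, map_smul, map_smul, hf]
        show ((P (f (c • a)) : H)) = c • (P (f a) : H)
        rw [key _ _ this, map_smul, Submodule.coe_smul] }
  have hAg : ∀ v, A (g v) = C v := fun v => by
    show A ((P (f v) : H)) = C v
    rw [hAP, hf]
  have hgmem : ∀ v, g v ∈ Kᗮ := fun v => (P (f v)).2
  -- closed graph
  have cont : Continuous g := by
    apply g.continuous_of_seq_closed_graph
    intro u x y hu hgu
    have h1 : Filter.Tendsto (fun n => A (g (u n))) Filter.atTop (nhds (A y)) :=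
      (A.continuous.tendsto y).comp hgu
    have h2 : Filter.Tendsto (fun n => A (g (u n))) Filter.atTop (nhds (C x)) := by
      simp only [hAg]
      exact (C.continuous.tendsto x).comp hu
    have hA : A y = C x := tendsto_nhds_unique h1 h2
    have hy : y ∈ Kᗮ := by
      have : IsClosed (Kᗮ : Set H) := K.isClosed_orthogonal
      exact this.mem_of_tendsto hgu (Filter.Eventually.of_forall fun n => hgmem (u n))
    exact keymem y (g x) hy (hgmem x) (by rw [hA, hAg])
  refine ⟨⟨g, cont⟩, ?_⟩
  ext v
  exact hAg v

lemma rangeProj_selfAdjoint (A : H →L[ℂ] H) : adjoint (rangeProj A) = rangeProj A := by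
  haveI : CompleteSpace (LinearMap.range (A : H →ₗ[ℂ] H)).topologicalClosure :=
    (Submodule.isClosed_topologicalClosure _).completeSpace_coe
  exact (isSelfAdjoint_starProjection (LinearMap.range (A : H →ₗ[ℂ] H)).topologicalClosure)

/-- Theorem 3.3 (existence part): if `range (C N_B) ⊆ range A` and
`range (P_{B*} C*) ⊆ range B*`, then `A X + Y B = C` has a solution. -/
theorem stmt6 (A B C : H →L[ℂ] H)
    (h1 : LinearMap.range ((C ∘L (1 - rangeProj (adjoint B)) : H →L[ℂ] H) : H →ₗ[ℂ] H) ≤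
      LinearMap.range (A : H →ₗ[ℂ] H))
    (h2 : LinearMap.range ((rangeProj (adjoint B) ∘L adjoint C : H →L[ℂ] H) : H →ₗ[ℂ] H) ≤
      LinearMap.range ((adjoint B : H →L[ℂ] H) : H →ₗ[ℂ] H)) :
    ∃ X Y : H →L[ℂ] H, A ∘L X + Y ∘L B = C := by
  obtain ⟨X, hX⟩ := douglas A _ h1
  obtain ⟨Z, hZ⟩ := douglas (adjoint B) _ h2
  refine ⟨X, adjoint Z, ?_⟩
  have hYB : adjoint Z ∘L B = C ∘L rangeProj (adjoint B) := by
    have := congrArg adjoint hZ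
    rw [adjoint_comp, adjoint_comp, adjoint_adjoint, adjoint_adjoint,
      rangeProj_selfAdjoint] at this
    exact this
  rw [hX, hYB]
  ext v
  simp [sub_apply, ContinuousLinearMap.comp_apply]
end

section
/- Let H be a complex Hilbert space and let A, B, C be bounded linear operators on H. If there exist bounded linear operators X and Y on H with A ∘ X + Y ∘ B = C, then N_{A*} ∘ C ∘ N_B = 0, i.e., (I − P_A) ∘ C ∘ (I − P_{B*}) = 0. -/
open ContinuousLinearMap

variable {H : Type*} [NormedAddCommGroup H] [InnerProductSpace ℂ H] [CompleteSpace H]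

lemma rangeProj_fix (A : H →L[ℂ] H) (x : H) : rangeProj A (A x) = A x := by
  haveI : CompleteSpace (LinearMap.range (A : H →ₗ[ℂ] H)).topologicalClosure :=
    (Submodule.isClosed_topologicalClosure _).completeSpace_coe
  have hmem : A x ∈ (LinearMap.range (A : H →ₗ[ℂ] H)).topologicalClosure :=
    Submodule.le_topologicalClosure _ (LinearMap.mem_range_self (A : H →ₗ[ℂ] H) x)
  simp only [rangeProj, coe_comp', Function.comp_apply, Submodule.coe_subtypeL',
    Submodule.coe_subtype]
  exact Submodule.starProjection_eq_self_iff.mpr hmem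

lemma sub_rangeProj_mem (A : H →L[ℂ] H) (x : H) :
    x - rangeProj A x ∈ ((LinearMap.range (A : H →ₗ[ℂ] H)).topologicalClosure)ᗮ := by
  haveI : CompleteSpace (LinearMap.range (A : H →ₗ[ℂ] H)).topologicalClosure :=
    (Submodule.isClosed_topologicalClosure _).completeSpace_coe
  exact Submodule.sub_starProjection_mem_orthogonal x

/-- Remark 3.4: if `A X + Y B = C` is solvable, then `(I - P_A) C (I - P_{B*}) = 0`. -/
theorem stmt7 (A B C : H →L[ℂ] H)
    (h : ∃ X Y : H →L[ℂ] H, A ∘L X + Y ∘L B = C) :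
    (1 - rangeProj A) ∘L C ∘L (1 - rangeProj (adjoint B)) = 0 := by
  obtain ⟨X, Y, hXY⟩ := h
  ext x
  set z := x - rangeProj (adjoint B) x with hz
  have hzmem : z ∈ ((LinearMap.range ((adjoint B : H →L[ℂ] H) : H →ₗ[ℂ] H)).topologicalClosure)ᗮ :=
    sub_rangeProj_mem _ x
  have hBz : B z = 0 := by
    have : (inner ℂ (B z) (B z) : ℂ) = 0 := by
      rw [← adjoint_inner_right]
      exact (Submodule.mem_orthogonal' _ _).mp hzmem _
        (Submodule.le_topologicalClosure _ (LinearMap.mem_range_self _ _))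
    simpa using inner_self_eq_zero.mp this
  have hCz : C z = A (X z) := by
    rw [← hXY]; simp [hBz]
  simp only [coe_comp', Function.comp_apply, sub_apply, ContinuousLinearMap.one_apply, zero_apply, ← hz, hCz,
    rangeProj_fix, sub_self]
end

section
/- Let H be a complex Hilbert space and let A, B, C be bounded linear operators on H with A* ∘ B = 0. Then the range of C is contained in (range A) + (range B) (sum of subspaces of H) if and only if there exist bounded linear operators X, Y on H with A ∘ X + B ∘ Y = C. Moreover, if these equivalent conditions hold, then there exists λ > 0 such that C ∘ C* ≤ λ • (A ∘ A* + B ∘ B*) in the Loewner order. -/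
open ContinuousLinearMap Filter Topology
open scoped ComplexInnerProductSpace

theorem my_douglas {E F G : Type*} [NormedAddCommGroup E] [InnerProductSpace ℂ E] [CompleteSpace E]
    [NormedAddCommGroup F] [InnerProductSpace ℂ F] [CompleteSpace F]
    [NormedAddCommGroup G] [NormedSpace ℂ G] [CompleteSpace G]
    (D : E →L[ℂ] F) (C : G →L[ℂ] F) (h : LinearMap.range (C : G →ₗ[ℂ] F) ≤ LinearMap.range (D : E →ₗ[ℂ] F)) :
    ∃ Z : G →L[ℂ] E, D ∘L Z = C := by
  set K : Submodule ℂ E := (LinearMap.ker (D : E →ₗ[ℂ] F))ᗮ with hKdef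
  haveI : CompleteSpace (LinearMap.ker (D : E →ₗ[ℂ] F)) :=
    (ContinuousLinearMap.isClosed_ker D).completeSpace_coe
  set Dk : K →L[ℂ] F := D.comp K.subtypeL with hDkdef
  have hinj : Function.Injective (Dk : K →ₗ[ℂ] F) := by
    rw [← LinearMap.ker_eq_bot]
    rw [Submodule.eq_bot_iff]
    rintro ⟨x, hxK⟩ hx
    have hxker : x ∈ LinearMap.ker (D : E →ₗ[ℂ] F) := by
      simpa [Dk] using hx
    have : x ∈ LinearMap.ker (D : E →ₗ[ℂ] F) ⊓ (LinearMap.ker (D : E →ₗ[ℂ] F))ᗮ := ⟨hxker, hxK⟩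
    rw [Submodule.inf_orthogonal_eq_bot] at this
    simpa using this
  have hmem : ∀ g : G, C g ∈ LinearMap.range (Dk : K →ₗ[ℂ] F) := by
    intro g
    obtain ⟨e, he⟩ := h (LinearMap.mem_range_self _ g)
    obtain ⟨p, hp, q, hq, rfl⟩ :=
      Submodule.exists_add_mem_mem_orthogonal (K := LinearMap.ker (D : E →ₗ[ℂ] F)) e
    refine ⟨⟨q, hq⟩, ?_⟩
    simp only [Dk, coe_comp', LinearMap.coe_comp, ContinuousLinearMap.coe_coe,
      Function.comp_apply, Submodule.coe_subtypeL', Submodule.coe_subtype]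
    simp only [ContinuousLinearMap.coe_coe] at he
    rw [LinearMap.mem_ker, ContinuousLinearMap.coe_coe] at hp
    rw [← he, map_add, hp, zero_add]
  set eqv := LinearEquiv.ofInjective (Dk : K →ₗ[ℂ] F) hinj with heqv
  set Zlin : G →ₗ[ℂ] E :=
    K.subtype ∘ₗ eqv.symm.toLinearMap ∘ₗ (C.toLinearMap.codRestrict _ hmem) with hZlin
  have hDZ : ∀ g, D (Zlin g) = C g := by
    intro g
    have : Dk (eqv.symm ⟨C g, hmem g⟩) = C g := by
      have := eqv.apply_symm_apply ⟨C g, hmem g⟩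
      have h2 := congrArg Subtype.val this
      rwa [LinearEquiv.ofInjective_apply] at h2
    exact this
  have hmemK : ∀ g, Zlin g ∈ K := fun g => (eqv.symm _).2
  have hseq : ∀ (u : ℕ → G) (x y), Tendsto u atTop (𝓝 x) →
      Tendsto (Zlin ∘ u) atTop (𝓝 y) → y = Zlin x := by
    intro u x y hu hZu
    have hyK : y ∈ K := by
      have : IsClosed (K : Set E) := Submodule.isClosed_orthogonal _
      exact this.mem_of_tendsto hZu (Eventually.of_forall fun n => hmemK (u n))
    have hDy : D y = C x := by
      have h1 : Tendsto (fun n => D (Zlin (u n))) atTop (𝓝 (D y)) :=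
        (D.continuous.tendsto _).comp hZu
      have h2 : Tendsto (fun n => D (Zlin (u n))) atTop (𝓝 (C x)) := by
        simp only [hDZ]
        exact (C.continuous.tendsto _).comp hu
      exact tendsto_nhds_unique h1 h2
    have hdiff : y - Zlin x ∈ LinearMap.ker (D : E →ₗ[ℂ] F) ⊓ K := by
      constructor
      · simp [LinearMap.mem_ker, map_sub, hDy, hDZ]
      · exact K.sub_mem hyK (hmemK x)
    rw [Submodule.inf_orthogonal_eq_bot, Submodule.mem_bot, sub_eq_zero] at hdiff
    exact hdiff
  refine ⟨ContinuousLinearMap.ofSeqClosedGraph hseq, ?_⟩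
  ext g
  exact hDZ g

set_option maxHeartbeats 1600000 in
/-- Theorem 3.5: if `A* B = 0`, then `range C ⊆ range A + range B` iff
`A X + B Y = C` has a solution; in that case `C C* ≤ λ (A A* + B B*)`
for some `λ > 0` (Loewner order). -/
theorem stmt8 {H : Type*} [NormedAddCommGroup H] [InnerProductSpace ℂ H] [CompleteSpace H]
    (A B C : H →L[ℂ] H) (hAB : adjoint A ∘L B = 0) :
    (LinearMap.range (C : H →ₗ[ℂ] H) ≤ LinearMap.range (A : H →ₗ[ℂ] H) ⊔
      LinearMap.range (B : H →ₗ[ℂ] H) ↔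
      ∃ X Y : H →L[ℂ] H, A ∘L X + B ∘L Y = C) ∧
    (LinearMap.range (C : H →ₗ[ℂ] H) ≤ LinearMap.range (A : H →ₗ[ℂ] H) ⊔
      LinearMap.range (B : H →ₗ[ℂ] H) →
      ∃ l : ℝ, 0 < l ∧
        ((l : ℂ) • (A ∘L adjoint A + B ∘L adjoint B) - C ∘L adjoint C).IsPositive) := by
  set e := WithLp.prodContinuousLinearEquiv 2 ℂ H H with he
  have main : LinearMap.range (C : H →ₗ[ℂ] H) ≤ LinearMap.range (A : H →ₗ[ℂ] H) ⊔ LinearMap.range (B : H →ₗ[ℂ] H) →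
      ∃ X Y : H →L[ℂ] H, A ∘L X + B ∘L Y = C := by
    intro hr
    set D : WithLp 2 (H × H) →L[ℂ] H := (A.coprod B) ∘L (e : WithLp 2 (H × H) →L[ℂ] H × H)
      with hD
    have hrange : LinearMap.range (C : H →ₗ[ℂ] H) ≤ LinearMap.range (D : WithLp 2 (H × H) →ₗ[ℂ] H) := by
      intro c hc
      obtain ⟨a, ⟨x₁, rfl⟩, b, ⟨x₂, rfl⟩, rfl⟩ := Submodule.mem_sup.mp (hr hc)
      exact ⟨e.symm (x₁, x₂), by simp [D]⟩
    obtain ⟨Z, hZ⟩ := my_douglas D C hrange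
    refine ⟨(ContinuousLinearMap.fst ℂ H H) ∘L ((e : WithLp 2 (H × H) →L[ℂ] H × H) ∘L Z),
      (ContinuousLinearMap.snd ℂ H H) ∘L ((e : WithLp 2 (H × H) →L[ℂ] H × H) ∘L Z), ?_⟩
    ext h
    have := DFunLike.congr_fun hZ h
    simpa [D] using this
  constructor
  · constructor
    · exact main
    · rintro ⟨X, Y, rfl⟩ c hc
      obtain ⟨h, rfl⟩ := hc
      exact Submodule.add_mem_sup (LinearMap.mem_range_self _ _) (LinearMap.mem_range_self _ _)
  · intro hr
    obtain ⟨X, Y, hXY⟩ := main hr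
    refine ⟨2 * ‖X‖ ^ 2 + 2 * ‖Y‖ ^ 2 + 1, by positivity, ?_⟩
    have hCadj : adjoint C = adjoint X ∘L adjoint A + adjoint Y ∘L adjoint B := by
      rw [← hXY]; simp [adjoint_comp]
    set l : ℝ := 2 * ‖X‖ ^ 2 + 2 * ‖Y‖ ^ 2 + 1 with hl
    constructor
    · rw [← isSelfAdjoint_iff_isSymmetric, IsSelfAdjoint, star_eq_adjoint]
      simp only [map_sub, map_smulₛₗ, map_add, adjoint_comp, adjoint_adjoint]
      norm_num
    · intro x
      have hnorm : ‖adjoint C x‖ ≤ ‖X‖ * ‖adjoint A x‖ + ‖Y‖ * ‖adjoint B x‖ := by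
        rw [hCadj]
        calc ‖(adjoint X ∘L adjoint A + adjoint Y ∘L adjoint B) x‖
            ≤ ‖adjoint X (adjoint A x)‖ + ‖adjoint Y (adjoint B x)‖ := norm_add_le _ _
          _ ≤ ‖adjoint X‖ * ‖adjoint A x‖ + ‖adjoint Y‖ * ‖adjoint B x‖ :=
              add_le_add (le_opNorm _ _) (le_opNorm _ _)
          _ = ‖X‖ * ‖adjoint A x‖ + ‖Y‖ * ‖adjoint B x‖ := by rw [adjoint.norm_map, adjoint.norm_map]
      have key : ‖adjoint C x‖ ^ 2 ≤ l * (‖adjoint A x‖ ^ 2 + ‖adjoint B x‖ ^ 2) := by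
        have h0 : (0:ℝ) ≤ ‖adjoint C x‖ := norm_nonneg _
        have h1 : (0:ℝ) ≤ ‖adjoint A x‖ := norm_nonneg _
        have h2 : (0:ℝ) ≤ ‖adjoint B x‖ := norm_nonneg _
        have h3 : (0:ℝ) ≤ ‖X‖ := norm_nonneg _
        have h4 : (0:ℝ) ≤ ‖Y‖ := norm_nonneg _
        set a := ‖adjoint A x‖
        set b := ‖adjoint B x‖
        have step1 : ‖adjoint C x‖ ^ 2 ≤ (‖X‖ * a + ‖Y‖ * b) ^ 2 := by
          apply pow_le_pow_left₀ h0 hnorm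
        have step2 : (‖X‖ * a + ‖Y‖ * b) ^ 2 ≤ 2 * ‖X‖ ^ 2 * a ^ 2 + 2 * ‖Y‖ ^ 2 * b ^ 2 := by
          nlinarith [sq_nonneg (‖X‖ * a - ‖Y‖ * b)]
        have step3 : 2 * ‖X‖ ^ 2 * a ^ 2 + 2 * ‖Y‖ ^ 2 * b ^ 2 ≤ l * (a ^ 2 + b ^ 2) := by
          have e1 : 2 * ‖X‖ ^ 2 ≤ l := by rw [hl]; nlinarith [sq_nonneg ‖Y‖]
          have e2 : 2 * ‖Y‖ ^ 2 ≤ l := by rw [hl]; nlinarith [sq_nonneg ‖X‖]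
          nlinarith [sq_nonneg a, sq_nonneg b]
        linarith
      have expand : (((l : ℂ) • (A ∘L adjoint A + B ∘L adjoint B) - C ∘L adjoint C)).reApplyInnerSelf x
          = l * (‖adjoint A x‖ ^ 2 + ‖adjoint B x‖ ^ 2) - ‖adjoint C x‖ ^ 2 := by
        have hA : ⟪A (adjoint A x), x⟫ = (‖adjoint A x‖ : ℂ) ^ 2 := by
          rw [← adjoint_inner_right, inner_self_eq_norm_sq_to_K]; norm_cast
        have hB : ⟪B (adjoint B x), x⟫ = (‖adjoint B x‖ : ℂ) ^ 2 := by
          rw [← adjoint_inner_right, inner_self_eq_norm_sq_to_K]; norm_cast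
        have hC : ⟪C (adjoint C x), x⟫ = (‖adjoint C x‖ : ℂ) ^ 2 := by
          rw [← adjoint_inner_right, inner_self_eq_norm_sq_to_K]; norm_cast
        simp only [reApplyInnerSelf_apply, sub_apply, smul_apply, add_apply, comp_apply,
          inner_sub_left, inner_smul_left, inner_add_left, hA, hB, hC]
        simp [Complex.ext_iff, ← Complex.ofReal_pow]
      rw [expand]
      linarith
end

section
/- Let H be a complex Hilbert space and let A, B be bounded linear operators on H with range A = range B and range A ≠ {0}. Then there exist nonzero bounded linear operators X and Y on H such that A ∘ X ∘ A* + B ∘ Y ∘ B* = 0. -/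
open ContinuousLinearMap

/-- Corollary 3.7: if `range A = range B` and `range A ≠ 0`, then
`A X A* + B Y B* = 0` has nonzero solutions `X, Y`. -/
theorem stmt10 {H : Type*} [NormedAddCommGroup H] [InnerProductSpace ℂ H] [CompleteSpace H]
    (A B : H →L[ℂ] H) (hr : LinearMap.range (A : H →ₗ[ℂ] H) = LinearMap.range (B : H →ₗ[ℂ] H))
    (hne : LinearMap.range (A : H →ₗ[ℂ] H) ≠ ⊥) :
    ∃ X Y : H →L[ℂ] H, X ≠ 0 ∧ Y ≠ 0 ∧
      A ∘L X ∘L adjoint A + B ∘L Y ∘L adjoint B = 0 := by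
  obtain ⟨a, ha, ha0⟩ := Submodule.exists_mem_ne_zero_of_ne_bot hne
  have haB : a ∈ LinearMap.range (B : H →ₗ[ℂ] H) := hr ▸ ha
  obtain ⟨u, hu⟩ := ha
  obtain ⟨v, hv⟩ := haB
  have hu0 : u ≠ 0 := by rintro rfl; simp [map_zero] at hu; exact ha0 hu.symm
  have hv0 : v ≠ 0 := by rintro rfl; simp [map_zero] at hv; exact ha0 hv.symm
  refine ⟨(innerSL ℂ u).smulRight u, -((innerSL ℂ v).smulRight v), ?_, ?_, ?_⟩
  · intro h
    have := DFunLike.congr_fun h u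
    simp only [smulRight_apply, innerSL_apply_apply, zero_apply] at this
    rcases smul_eq_zero.mp this with h'' | h''
    · exact hu0 (inner_self_eq_zero.mp h'')
    · exact hu0 h''
  · intro h
    have h' : (innerSL ℂ v).smulRight v = 0 := by
      have := congrArg Neg.neg h; simpa using this
    have := DFunLike.congr_fun h' v
    simp only [smulRight_apply, innerSL_apply_apply, zero_apply] at this
    rcases smul_eq_zero.mp this with h'' | h''
    · exact hv0 (inner_self_eq_zero.mp h'')
    · exact hv0 h''
  · ext x
    simp only [add_apply, comp_apply, neg_apply, smulRight_apply, innerSL_apply_apply, map_smul,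
      map_neg, zero_apply]
    simp only [ContinuousLinearMap.coe_coe] at hu hv
    rw [hu, hv, adjoint_inner_right, adjoint_inner_right, hu, hv]
    exact add_neg_cancel _
end
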